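/- Let (X₁,Y₁), (X₂,Y₂), (X₃,Y₃) be three independent, identically distributed pairs of real random variables whose common joint distribution function is H with continuous marginal distribution functions F and G, and let C be the copula with H(x,y) = C(F(x), G(y)) for all x, y. Then the Spearman's rho ρ = 3{ P((X₁−X₂)(Y₁−Y₃) > 0) − P((X₁−X₂)(Y₁−Y₃) < 0) } satisfies ρ = 12 ∫₀¹ ∫₀¹ C(u,v) du dv − 3. -/

import Mathlib

open MeasureTheory Set ProbabilityTheory Filter

/-- A (bivariate) copula. -/
def IsCopula (C : ℝ → ℝ → ℝ) : Prop :=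
  (∀ u ∈ Icc (0:ℝ) 1, ∀ v ∈ Icc (0:ℝ) 1, C u v ∈ Icc (0:ℝ) 1) ∧
  (∀ u ∈ Icc (0:ℝ) 1, C u 0 = 0 ∧ C u 1 = u) ∧
  (∀ v ∈ Icc (0:ℝ) 1, C 0 v = 0 ∧ C 1 v = v) ∧
  (∀ u₁ ∈ Icc (0:ℝ) 1, ∀ u₂ ∈ Icc (0:ℝ) 1, ∀ v₁ ∈ Icc (0:ℝ) 1, ∀ v₂ ∈ Icc (0:ℝ) 1,
    u₁ ≤ u₂ → v₁ ≤ v₂ → 0 ≤ C u₂ v₂ - C u₂ v₁ - C u₁ v₂ + C u₁ v₁)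


noncomputable def clampI (t : ℝ) : ℝ := max 0 (min 1 t)

lemma clampI_mem (t : ℝ) : clampI t ∈ Icc (0:ℝ) 1 := by
  constructor
  · exact le_max_left _ _
  · unfold clampI
    rcases le_total 1 t with h | h <;> simp [min_def, max_def] <;> split <;> split <;> intros <;> norm_num <;> linarith

lemma clampI_eq {t : ℝ} (h : t ∈ Icc (0:ℝ) 1) : clampI t = t := by
  unfold clampI
  rw [min_eq_right h.2, max_eq_right h.1]

lemma clampI_lip (s t : ℝ) : |clampI s - clampI t| ≤ |s - t| := by
  unfold clampI
  calc |max 0 (min 1 s) - max 0 (min 1 t)| ≤ max |0 - 0| |min 1 s - min 1 t| :=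
        abs_max_sub_max_le_max _ _ _ _
    _ ≤ max |0 - 0| (max |1-1| |s - t|) := by
        exact max_le_max le_rfl (abs_min_sub_min_le_max _ _ _ _)
    _ ≤ |s - t| := by simp [abs_nonneg]

lemma copula_mono_u {C : ℝ → ℝ → ℝ} (hC : IsCopula C) {u₁ u₂ v : ℝ}
    (h1 : u₁ ∈ Icc (0:ℝ) 1) (h2 : u₂ ∈ Icc (0:ℝ) 1) (hv : v ∈ Icc (0:ℝ) 1)
    (h : u₁ ≤ u₂) : 0 ≤ C u₂ v - C u₁ v ∧ C u₂ v - C u₁ v ≤ u₂ - u₁ := by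
  obtain ⟨-, hB, -, h2inc⟩ := hC
  have h0 : (0:ℝ) ∈ Icc (0:ℝ) 1 := by norm_num
  have h1' : (1:ℝ) ∈ Icc (0:ℝ) 1 := by norm_num
  have ha := h2inc u₁ h1 u₂ h2 0 h0 v hv h hv.1
  have hb := h2inc u₁ h1 u₂ h2 v hv 1 h1' h hv.2
  have e1 := (hB u₁ h1).1; have e2 := (hB u₂ h2).1
  have e3 := (hB u₁ h1).2; have e4 := (hB u₂ h2).2
  constructor <;> linarith

lemma copula_mono_v {C : ℝ → ℝ → ℝ} (hC : IsCopula C) {v₁ v₂ u : ℝ}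
    (h1 : v₁ ∈ Icc (0:ℝ) 1) (h2 : v₂ ∈ Icc (0:ℝ) 1) (hu : u ∈ Icc (0:ℝ) 1)
    (h : v₁ ≤ v₂) : 0 ≤ C u v₂ - C u v₁ ∧ C u v₂ - C u v₁ ≤ v₂ - v₁ := by
  obtain ⟨-, -, hB, h2inc⟩ := hC
  have h0 : (0:ℝ) ∈ Icc (0:ℝ) 1 := by norm_num
  have h1' : (1:ℝ) ∈ Icc (0:ℝ) 1 := by norm_num
  have ha := h2inc 0 h0 u hu v₁ h1 v₂ h2 hu.1 h
  have hb := h2inc u hu 1 h1' v₁ h1 v₂ h2 hu.2 h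
  have e1 := (hB v₁ h1).1; have e2 := (hB v₂ h2).1
  have e3 := (hB v₁ h1).2; have e4 := (hB v₂ h2).2
  constructor <;> linarith

lemma copula_lip {C : ℝ → ℝ → ℝ} (hC : IsCopula C) {u₁ u₂ v₁ v₂ : ℝ}
    (hu1 : u₁ ∈ Icc (0:ℝ) 1) (hu2 : u₂ ∈ Icc (0:ℝ) 1)
    (hv1 : v₁ ∈ Icc (0:ℝ) 1) (hv2 : v₂ ∈ Icc (0:ℝ) 1) :
    |C u₂ v₂ - C u₁ v₁| ≤ |u₂ - u₁| + |v₂ - v₁| := by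
  have h1 : |C u₂ v₂ - C u₁ v₂| ≤ |u₂ - u₁| := by
    rcases le_total u₁ u₂ with h | h
    · have := copula_mono_u hC hu1 hu2 hv2 h
      rw [abs_of_nonneg this.1, abs_of_nonneg (by linarith : (0:ℝ) ≤ u₂ - u₁)]
      exact this.2
    · have := copula_mono_u hC hu2 hu1 hv2 h
      rw [abs_sub_comm, abs_of_nonneg this.1, abs_sub_comm, abs_of_nonneg (by linarith : (0:ℝ) ≤ u₁ - u₂)]
      exact this.2
  have h2 : |C u₁ v₂ - C u₁ v₁| ≤ |v₂ - v₁| := by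
    rcases le_total v₁ v₂ with h | h
    · have := copula_mono_v hC hv1 hv2 hu1 h
      rw [abs_of_nonneg this.1, abs_of_nonneg (by linarith : (0:ℝ) ≤ v₂ - v₁)]
      exact this.2
    · have := copula_mono_v hC hv2 hv1 hu1 h
      rw [abs_sub_comm, abs_of_nonneg this.1, abs_sub_comm, abs_of_nonneg (by linarith : (0:ℝ) ≤ v₁ - v₂)]
      exact this.2
  calc |C u₂ v₂ - C u₁ v₁| ≤ |C u₂ v₂ - C u₁ v₂| + |C u₁ v₂ - C u₁ v₁| := abs_sub_le _ _ _
    _ ≤ |u₂ - u₁| + |v₂ - v₁| := add_le_add h1 h2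

noncomputable def clampC (C : ℝ → ℝ → ℝ) (u v : ℝ) : ℝ := C (clampI u) (clampI v)

lemma clampC_cont {C : ℝ → ℝ → ℝ} (hC : IsCopula C) :
    Continuous (fun p : ℝ × ℝ => clampC C p.1 p.2) := by
  apply (LipschitzWith.of_dist_le_mul (K := 2) ?_).continuous
  rintro ⟨u, v⟩ ⟨u', v'⟩
  have h := copula_lip hC (clampI_mem u') (clampI_mem u) (clampI_mem v') (clampI_mem v)
  have l1 := clampI_lip u u'
  have l2 := clampI_lip v v'
  have hd1 : |u - u'| ≤ dist (u,v) (u',v') := by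
    rw [Prod.dist_eq]; exact le_max_of_le_left (by rw [Real.dist_eq])
  have hd2 : |v - v'| ≤ dist (u,v) (u',v') := by
    rw [Prod.dist_eq]; exact le_max_of_le_right (by rw [Real.dist_eq])
  simp only [clampC, Real.dist_eq]
  push_cast
  calc |C (clampI u) (clampI v) - C (clampI u') (clampI v')| ≤ |clampI u - clampI u'| + |clampI v - clampI v'| := h
    _ ≤ |u - u'| + |v - v'| := add_le_add l1 l2
    _ ≤ 2 * dist (u,v) (u',v') := by linarith



variable {ν : Measure ℝ} [IsProbabilityMeasure ν] {F : ℝ → ℝ}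

lemma cdf_facts (hF : ∀ x, F x = (ν (Iic x)).toReal) :
    (∀ x, ENNReal.ofReal (F x) = ν (Iic x)) ∧ Monotone F ∧ (∀ x, F x ∈ Icc (0:ℝ) 1) := by
  have hof : ∀ x, ENNReal.ofReal (F x) = ν (Iic x) := by
    intro x; rw [hF x, ENNReal.ofReal_toReal (measure_ne_top _ _)]
  refine ⟨hof, ?_, ?_⟩
  · intro a b hab
    rw [hF a, hF b]
    exact ENNReal.toReal_mono (measure_ne_top _ _) (measure_mono (Iic_subset_Iic.2 hab))
  · intro x
    rw [hF x]
    constructor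
    · exact ENNReal.toReal_nonneg
    · rw [← ENNReal.toReal_one]
      exact ENNReal.toReal_mono ENNReal.one_ne_top (prob_le_one)

lemma atomless_of_cont_cdf (hF : ∀ x, F x = (ν (Iic x)).toReal) (hc : Continuous F)
    (x : ℝ) : ν {x} = 0 := by
  obtain ⟨hof, hmono, _⟩ := cdf_facts hF
  have key : ∀ n : ℕ, ν {x} ≤ ENNReal.ofReal (F x - F (x - 1/(n+1))) := by
    intro n
    have hlt : x - 1/(n+1) < x := by
      have : (0:ℝ) < 1/(n+1) := by positivity
      linarith
    have hsub : {x} ⊆ Ioc (x - 1/(n+1)) x := by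
      intro y hy; simp at hy; subst hy; exact ⟨hlt, le_refl _⟩
    refine (measure_mono hsub).trans ?_
    have : ν (Ioc (x - 1/(n+1)) x) = ν (Iic x) - ν (Iic (x - 1/(n+1))) := by
      rw [← Iic_sdiff_Iic, measure_diff (Iic_subset_Iic.2 hlt.le) nullMeasurableSet_Iic
        (measure_ne_top _ _)]
    rw [this, ← hof, ← hof, ENNReal.ofReal_sub _ (by
      rw [hF]; exact ENNReal.toReal_nonneg)]
  have htend : Tendsto (fun n : ℕ => ENNReal.ofReal (F x - F (x - 1/(n+1)))) atTop (nhds 0) := by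
    have h1 : Tendsto (fun n : ℕ => x - 1/(n+1 : ℝ)) atTop (nhds x) := by
      have := tendsto_one_div_add_atTop_nhds_zero_nat (𝕜 := ℝ)
      have h2 := this.const_sub x
      simpa using h2.congr (fun n => by push_cast; ring)
    have h3 : Tendsto (fun n : ℕ => F x - F (x - 1/(n+1))) atTop (nhds 0) := by
      have := (hc.tendsto x).comp h1
      have h4 := (tendsto_const_nhds (x := F x) (f := atTop (α := ℕ))).sub this
      simpa using h4
    have := (ENNReal.continuous_ofReal.tendsto 0).comp h3
    simpa [Function.comp_def] using this
  exact le_antisymm (ge_of_tendsto' htend key) zero_le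

lemma map_cdf_uniform (hF : ∀ x, F x = (ν (Iic x)).toReal) (hc : Continuous F) :
    ν.map F = volume.restrict (Icc (0:ℝ) 1) := by
  obtain ⟨hof, hmono, hmem⟩ := cdf_facts hF
  have hFmeas : Measurable F := hc.measurable
  have hbot : ∀ t : ℝ, 0 < t → ∃ a : ℝ, F a < t := by
    intro t htpos
    have hanti : Antitone (fun n : ℕ => Iic (-(n:ℝ))) := by
      intro m n hmn
      exact Iic_subset_Iic.2 (by exact_mod_cast neg_le_neg (by exact_mod_cast hmn))
    have hempty : (⋂ n : ℕ, Iic (-(n:ℝ))) = ∅ := by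
      ext x
      simp only [mem_iInter, mem_Iic, mem_empty_iff_false, iff_false, not_forall, not_le]
      obtain ⟨n, hn⟩ := exists_nat_gt (-x)
      exact ⟨n, by linarith⟩
    have htend := tendsto_measure_iInter_atTop (μ := ν)
      (fun n : ℕ => nullMeasurableSet_Iic) hanti ⟨0, measure_ne_top _ _⟩
    rw [hempty, measure_empty] at htend
    have : ∀ᶠ n : ℕ in atTop, ν (Iic (-(n:ℝ))) < ENNReal.ofReal t :=
      htend.eventually_lt_const (by simp [htpos])
    obtain ⟨n, hn⟩ := this.exists
    refine ⟨-(n:ℝ), ?_⟩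
    rw [hF]
    calc (ν (Iic (-(n:ℝ)))).toReal < (ENNReal.ofReal t).toReal :=
        ENNReal.toReal_strict_mono (by simp) hn
      _ = t := ENNReal.toReal_ofReal htpos.le
  have htop : Tendsto F atTop (nhds 1) := by
    have := tendsto_measure_Iic_atTop (μ := ν)
    rw [measure_univ] at this
    have h2 := (ENNReal.tendsto_toReal ENNReal.one_ne_top).comp this
    have h3 : Tendsto (fun x => (ν (Iic x)).toReal) atTop (nhds 1) := by
      simpa [Function.comp_def] using h2
    exact h3.congr (fun x => (hF x).symm)
  have : IsFiniteMeasure (ν.map F) := by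
    constructor
    rw [Measure.map_apply hFmeas MeasurableSet.univ]
    simp
  refine Measure.ext_of_Iic (ν.map F) _ (fun t => ?_)
  rw [Measure.map_apply hFmeas measurableSet_Iic,
    Measure.restrict_apply measurableSet_Iic]
  rcases lt_or_ge t 0 with ht | ht
  · have : F ⁻¹' Iic t = ∅ := by
      ext x; simp only [mem_preimage, mem_Iic, mem_empty_iff_false, iff_false, not_le]
      exact lt_of_lt_of_le ht (hmem x).1
    rw [this]
    have : Iic t ∩ Icc (0:ℝ) 1 = ∅ := by
      ext x; simp only [mem_inter_iff, mem_Iic, mem_Icc, mem_empty_iff_false, iff_false]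
      rintro ⟨h1, h2, -⟩; linarith
    simp [this]
  rcases le_or_gt 1 t with ht1 | ht1
  · have h1 : F ⁻¹' Iic t = univ := by
      ext x; simp only [mem_preimage, mem_Iic, mem_univ, iff_true]
      exact (hmem x).2.trans ht1
    have h2 : Iic t ∩ Icc (0:ℝ) 1 = Icc 0 1 := by
      rw [inter_eq_right]
      intro x hx; exact hx.2.trans ht1
    rw [h1, h2]
    simp [Real.volume_Icc]
  -- now 0 ≤ t < 1
  have h2 : Iic t ∩ Icc (0:ℝ) 1 = Icc 0 t := by
    ext x; simp only [mem_inter_iff, mem_Iic, mem_Icc]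
    constructor
    · rintro ⟨h1, h2, -⟩; exact ⟨h2, h1⟩
    · rintro ⟨h1, h2⟩; exact ⟨h2, h1, by linarith⟩
  rw [h2, Real.volume_Icc]
  by_cases hne : (F ⁻¹' Iic t).Nonempty
  · -- sup argument
    have hbdd : BddAbove (F ⁻¹' Iic t) := by
      obtain ⟨b, hb⟩ := (htop.eventually (eventually_gt_nhds ht1)).exists
      exact ⟨b, fun x hx => by
        by_contra hxb
        push_neg at hxb
        exact absurd (hmono hxb.le) (by simp only [mem_preimage, mem_Iic] at hx; linarith)⟩
    have hclosed : IsClosed (F ⁻¹' Iic t) := isClosed_Iic.preimage hc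
    set s := sSup (F ⁻¹' Iic t) with hs
    have hsmem : s ∈ F ⁻¹' Iic t := hclosed.csSup_mem hne hbdd
    have hFs : F s ≤ t := hsmem
    have hFseq : F s = t := by
      by_contra hne'
      have hlt : F s < t := lt_of_le_of_ne hFs hne'
      have : ∀ᶠ y in nhds s, F y < t := (hc.tendsto s).eventually (eventually_lt_nhds hlt)
      obtain ⟨ε, hε, hball⟩ := Metric.eventually_nhds_iff.mp this
      have hy : F (s + ε/2) < t := hball (by simp [Real.dist_eq, abs_of_nonneg, hε.le]; linarith)
      have : s + ε/2 ≤ s := le_csSup hbdd hy.le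
      linarith
    have hpre : F ⁻¹' Iic t = Iic s := by
      ext x
      simp only [mem_preimage, mem_Iic]
      constructor
      · intro hx; exact le_csSup hbdd hx
      · intro hx; exact (hmono hx).trans (le_of_eq hFseq)
    rw [hpre, ← hof, hFseq]
    rw [ENNReal.ofReal_eq_ofReal_iff (by linarith) (by linarith)]
    ring
  · -- empty preimage: then t = 0? show measure-zero both sides
    rw [not_nonempty_iff_eq_empty] at hne
    rw [hne]
    have ht0 : t = 0 := by
      by_contra ht0
      have htpos : 0 < t := lt_of_le_of_ne ht ((Ne.symm ht0))
      obtain ⟨a, ha⟩ := hbot t htpos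
      have : a ∈ F ⁻¹' Iic t := ha.le
      rw [hne] at this; exact this
    simp [ht0]

lemma integrable_of_bounded' {α : Type*} [MeasurableSpace α] {m : Measure α} [IsFiniteMeasure m]
    {f : α → ℝ} (hm : AEStronglyMeasurable f m) (hb : ∀ x, |f x| ≤ 1) : Integrable f m :=
  Integrable.mono' (integrable_const 1) hm (ae_of_all _ (fun x => by simpa using hb x))

/-- Spearman's rho of three i.i.d. pairs `(Xᵢ, Yᵢ)` with continuous margins and copula `C`
equals `12 ∫₀¹∫₀¹ C(u,v) du dv − 3`. -/
theorem spearman_rho_copula_formula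
    {Ω : Type*} [MeasurableSpace Ω] (μ : Measure Ω) [IsProbabilityMeasure μ]
    (X Y : Fin 3 → Ω → ℝ) (hX : ∀ i, Measurable (X i)) (hY : ∀ i, Measurable (Y i))
    (hindep : iIndepFun
      (fun i ω => (X i ω, Y i ω)) μ)
    (hident : ∀ i : Fin 3, μ.map (fun ω => (X i ω, Y i ω))
      = μ.map (fun ω => (X 0 ω, Y 0 ω)))
    (F G : ℝ → ℝ) (H : ℝ → ℝ → ℝ)
    (hF : ∀ x, F x = (μ {ω | X 0 ω ≤ x}).toReal)
    (hG : ∀ y, G y = (μ {ω | Y 0 ω ≤ y}).toReal)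
    (hH : ∀ x y, H x y = (μ {ω | X 0 ω ≤ x ∧ Y 0 ω ≤ y}).toReal)
    (hFcont : Continuous F) (hGcont : Continuous G)
    (C : ℝ → ℝ → ℝ) (hC : IsCopula C)
    (hHC : ∀ x y, H x y = C (F x) (G y)) :
    3 * ((μ {ω | 0 < (X 0 ω - X 1 ω) * (Y 0 ω - Y 2 ω)}).toReal
        - (μ {ω | (X 0 ω - X 1 ω) * (Y 0 ω - Y 2 ω) < 0}).toReal)
      = 12 * (∫ u in (0:ℝ)..1, ∫ v in (0:ℝ)..1, C u v) - 3 := by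
  classical
  -- basic setup
  set Z : Fin 3 → Ω → ℝ × ℝ := fun i ω => (X i ω, Y i ω) with hZdef
  have hZm : ∀ i, Measurable (Z i) := fun i => (hX i).prodMk (hY i)
  set ν : Measure (ℝ × ℝ) := μ.map (Z 0) with hνdef
  have hνprob : IsProbabilityMeasure ν := Measure.isProbabilityMeasure_map (hZm 0).aemeasurable
  set νX : Measure ℝ := μ.map (X 0) with hνXdef
  set νY : Measure ℝ := μ.map (Y 0) with hνYdef
  have hνXprob : IsProbabilityMeasure νX := Measure.isProbabilityMeasure_map (hX 0).aemeasurable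
  have hνYprob : IsProbabilityMeasure νY := Measure.isProbabilityMeasure_map (hY 0).aemeasurable
  -- margins as cdfs
  have hFx : ∀ x, F x = (νX (Iic x)).toReal := by
    intro x
    rw [hF x, hνXdef, Measure.map_apply (hX 0) measurableSet_Iic]
    rfl
  have hGy : ∀ y, G y = (νY (Iic y)).toReal := by
    intro y
    rw [hG y, hνYdef, Measure.map_apply (hY 0) measurableSet_Iic]
    rfl
  obtain ⟨hFof, hFmono, hFmem⟩ := cdf_facts hFx
  obtain ⟨hGof, hGmono, hGmem⟩ := cdf_facts hGy
  have hmapF : νX.map F = volume.restrict (Icc (0:ℝ) 1) := map_cdf_uniform hFx hFcont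
  have hmapG : νY.map G = volume.restrict (Icc (0:ℝ) 1) := map_cdf_uniform hGy hGcont
  have hatomX : ∀ x, νX {x} = 0 := atomless_of_cont_cdf hFx hFcont
  have hatomY : ∀ y, νY {y} = 0 := atomless_of_cont_cdf hGy hGcont
  -- ν marginals
  have hfst : ν.map Prod.fst = νX := by
    rw [hνdef, Measure.map_map measurable_fst (hZm 0)]; rfl
  have hsnd : ν.map Prod.snd = νY := by
    rw [hνdef, Measure.map_map measurable_snd (hZm 0)]; rfl
  -- rectangle probabilities for ν
  have hνIic : ∀ x y, ν (Iic x ×ˢ Iic y) = ENNReal.ofReal (H x y) := by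
    intro x y
    rw [hH x y, hνdef, ENNReal.ofReal_toReal (measure_ne_top _ _),
      Measure.map_apply (hZm 0) (measurableSet_Iic.prod measurableSet_Iic)]
    rfl
  have hνA : ∀ x, ν (Iic x ×ˢ (univ : Set ℝ)) = ENNReal.ofReal (F x) := by
    intro x
    rw [hFof x, ← hfst, Measure.map_apply measurable_fst measurableSet_Iic, ← prod_univ]
  have hνB : ∀ y, ν ((univ : Set ℝ) ×ˢ Iic y) = ENNReal.ofReal (G y) := by
    intro y
    rw [hGof y, ← hsnd, Measure.map_apply measurable_snd measurableSet_Iic, ← univ_prod]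
  have hνx0 : ∀ x, ν ({x} ×ˢ (univ : Set ℝ)) = 0 := by
    intro x
    rw [← hatomX x, ← hfst, Measure.map_apply measurable_fst (measurableSet_singleton x), ← prod_univ]
  have hνy0 : ∀ y, ν ((univ : Set ℝ) ×ˢ ({y} : Set ℝ)) = 0 := by
    intro y
    rw [← hatomY y, ← hsnd, Measure.map_apply measurable_snd (measurableSet_singleton y), ← univ_prod]
  -- real inequalities
  have hHnn : ∀ x y, 0 ≤ H x y := fun x y => by rw [hH]; exact ENNReal.toReal_nonneg
  have hHleF : ∀ x y, H x y ≤ F x := by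
    intro x y
    rw [hH, hF]
    exact ENNReal.toReal_mono (measure_ne_top _ _) (measure_mono (fun ω hω => hω.1))
  have hHleG : ∀ x y, H x y ≤ G y := by
    intro x y
    rw [hH, hG]
    exact ENNReal.toReal_mono (measure_ne_top _ _) (measure_mono (fun ω hω => hω.2))
  have hFGle : ∀ x y, F x + G y ≤ 1 + H x y := by
    intro x y
    have h1 : ν (Iic x ×ˢ (univ:Set ℝ)) + ν ((univ:Set ℝ) ×ˢ Iic y)
        = ν ((Iic x ×ˢ (univ:Set ℝ)) ∪ ((univ:Set ℝ) ×ˢ Iic y))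
          + ν ((Iic x ×ˢ (univ:Set ℝ)) ∩ ((univ:Set ℝ) ×ˢ Iic y)) :=
      (measure_union_add_inter _ (MeasurableSet.univ.prod measurableSet_Iic)).symm
    have h2 : (Iic x ×ˢ (univ:Set ℝ)) ∩ ((univ:Set ℝ) ×ˢ Iic y) = Iic x ×ˢ Iic y := by
      rw [prod_inter_prod, inter_univ, univ_inter]
    rw [h2, hνA, hνB, hνIic] at h1
    have h3 : ν ((Iic x ×ˢ (univ:Set ℝ)) ∪ ((univ:Set ℝ) ×ˢ Iic y)) ≤ 1 := prob_le_one
    have h4 : ENNReal.ofReal (F x) + ENNReal.ofReal (G y) ≤ 1 + ENNReal.ofReal (H x y) := by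
      rw [h1]; exact add_le_add_left h3 _
    rw [← ENNReal.ofReal_add ((hFmem x).1) ((hGmem y).1), ← ENNReal.ofReal_one,
      ← ENNReal.ofReal_add (by norm_num) (hHnn x y)] at h4
    exact (ENNReal.ofReal_le_ofReal_iff (by linarith [hHnn x y])).mp h4
  -- open rectangles
  have hdiffnull : ∀ x y, ν ((Iic x ×ˢ Iic y) \ (Iio x ×ˢ Iio y)) = 0 := by
    intro x y
    have hsub : (Iic x ×ˢ Iic y) \ (Iio x ×ˢ Iio y) ⊆ (({x}:Set ℝ) ×ˢ (univ:Set ℝ)) ∪ ((univ:Set ℝ) ×ˢ ({y}:Set ℝ)) := by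
      rintro ⟨a, b⟩ ⟨⟨ha, hb⟩, hnot⟩
      simp only [mem_prod, mem_Iio, not_and_or, not_lt] at hnot
      simp only [mem_Iic] at ha hb
      rcases hnot with h | h
      · left; simp [le_antisymm ha h]
      · right; simp [le_antisymm hb h]
    have h1 := (measure_mono (μ := ν) hsub).trans (measure_union_le _ _)
    rw [hνx0 x, hνy0 y, add_zero] at h1
    exact le_antisymm h1 zero_le
  have hIioIic : ∀ x y, ν (Iio x ×ˢ Iio y) = ν (Iic x ×ˢ Iic y) := by
    intro x y
    have hsub : Iio x ×ˢ Iio y ⊆ Iic x ×ˢ Iic y :=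
      prod_mono (Iio_subset_Iic_self) (Iio_subset_Iic_self)
    have h1 : ν (Iic x ×ˢ Iic y) ≤ ν (Iio x ×ˢ Iio y) + ν ((Iic x ×ˢ Iic y) \ (Iio x ×ˢ Iio y)) := by
      refine (measure_mono ?_).trans (measure_union_le _ _)
      intro p hp
      by_cases h : p ∈ Iio x ×ˢ Iio y
      · exact Or.inl h
      · exact Or.inr ⟨hp, h⟩
    rw [hdiffnull, add_zero] at h1
    exact le_antisymm (measure_mono hsub) h1
  have key2 : ∀ x y, ν (Iio x ×ˢ Iio y) = ENNReal.ofReal (H x y) := by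
    intro x y; rw [hIioIic, hνIic]
  have hsubnull : ∀ (x y : ℝ) {A B : Set (ℝ×ℝ)}, B ⊆ A →
      (A \ B ⊆ ((({x}:Set ℝ) ×ˢ (univ:Set ℝ)) ∪ ((univ:Set ℝ) ×ˢ ({y}:Set ℝ)))) → ν A = ν B := by
    intro x y A B hsub hdiff
    refine le_antisymm ?_ (measure_mono hsub)
    have h1 : ν A ≤ ν B + ν (A \ B) := by
      refine (measure_mono ?_).trans (measure_union_le _ _)
      intro p hp
      by_cases h : p ∈ B
      · exact Or.inl h
      · exact Or.inr ⟨hp, h⟩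
    have h2 : ν (A \ B) = 0 := by
      have := (measure_mono (μ := ν) hdiff).trans (measure_union_le _ _)
      rw [hνx0 x, hνy0 y, add_zero] at this
      exact le_antisymm this zero_le
    rwa [h2, add_zero] at h1
  have hsplit : ∀ {A B T : Set (ℝ×ℝ)} (a b : ℝ), 0 ≤ a → a ≤ b → MeasurableSet T →
      Disjoint A T → A ∪ T = B → ν A = ENNReal.ofReal a → ν B = ENNReal.ofReal b →
      ν T = ENNReal.ofReal (b - a) := by
    intro A B T a b ha hab hT hdis hun hA hB
    have h1 : ν A + ν T = ν B := by rw [← hun, measure_union hdis hT]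
    rw [hA, hB] at h1
    have h2 : ENNReal.ofReal a + ENNReal.ofReal (b - a) = ENNReal.ofReal b := by
      rw [← ENNReal.ofReal_add ha (by linarith)]
      congr 1
      ring
    rw [← h2] at h1
    exact WithTop.add_left_cancel ENNReal.ofReal_ne_top h1
  -- Iio variants of rectangle measures
  have n1 : ∀ y, ν ((univ:Set ℝ) ×ˢ Iio y) = ENNReal.ofReal (G y) := by
    intro y
    rw [← hνB y]
    refine (hsubnull 0 y (Set.prod_mono subset_rfl Iio_subset_Iic_self) ?_).symm
    rintro ⟨a, b⟩ ⟨⟨-, hb⟩, hnot⟩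
    simp only [mem_prod, mem_univ, true_and, mem_Iio, not_and, not_lt] at hnot
    right
    simp only [mem_prod, mem_univ, true_and, mem_singleton_iff]
    exact le_antisymm hb hnot
  have n4 : ∀ x, ν (Iio x ×ˢ (univ:Set ℝ)) = ENNReal.ofReal (F x) := by
    intro x
    rw [← hνA x]
    refine (hsubnull x 0 (Set.prod_mono Iio_subset_Iic_self subset_rfl) ?_).symm
    rintro ⟨a, b⟩ ⟨⟨ha, -⟩, hnot⟩
    simp only [mem_prod, mem_Iio, mem_univ, and_true, not_and, not_lt] at hnot
    left
    simp only [mem_prod, mem_univ, and_true, mem_singleton_iff]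
    exact le_antisymm ha (by simpa using hnot)
  have n2 : ∀ x y, ν (Iic x ×ˢ Iio y) = ENNReal.ofReal (H x y) := by
    intro x y
    rw [← hνIic x y]
    refine (hsubnull 0 y (Set.prod_mono subset_rfl Iio_subset_Iic_self) ?_).symm
    rintro ⟨a, b⟩ ⟨⟨ha, hb⟩, hnot⟩
    simp only [mem_prod, mem_Iic, mem_Iio, not_and] at hnot
    right
    simp only [mem_prod, mem_univ, true_and, mem_singleton_iff]
    exact le_antisymm hb (not_lt.mp (hnot ha))
  have n3 : ∀ x y, ν (Iio x ×ˢ Iic y) = ENNReal.ofReal (H x y) := by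
    intro x y
    rw [← hνIic x y]
    refine (hsubnull x 0 (Set.prod_mono Iio_subset_Iic_self subset_rfl) ?_).symm
    rintro ⟨a, b⟩ ⟨⟨ha, hb⟩, hnot⟩
    simp only [mem_prod, mem_Iio, mem_Iic, not_and] at hnot
    left
    simp only [mem_prod, mem_univ, and_true, mem_singleton_iff]
    by_cases h : a < x
    · exact absurd hb (hnot h)
    · exact le_antisymm ha (not_lt.mp h)
  -- half-open rectangle values
  have m1 : ∀ x y, ν (Iic x ×ˢ Ioi y) = ENNReal.ofReal (F x - H x y) := by
    intro x y
    refine hsplit (H x y) (F x) (hHnn x y) (hHleF x y) (measurableSet_Iic.prod measurableSet_Ioi) ?_ ?_ (hνIic x y) (hνA x)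
    · exact Set.disjoint_left.mpr (fun p hpA hpT =>
        absurd (mem_Ioi.mp hpT.2) (not_lt.mpr (mem_Iic.mp hpA.2)))
    · rw [← prod_union, Iic_union_Ioi]
  have m2 : ∀ y, ν ((univ:Set ℝ) ×ˢ Ioi y) = ENNReal.ofReal (1 - G y) := by
    intro y
    refine hsplit (G y) 1 ((hGmem y).1) ((hGmem y).2) (MeasurableSet.univ.prod measurableSet_Ioi) ?_ ?_ (hνB y)
      (show ν ((univ:Set ℝ) ×ˢ (univ:Set ℝ)) = ENNReal.ofReal 1 by
        rw [univ_prod_univ, measure_univ, ENNReal.ofReal_one])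
    · exact Set.disjoint_left.mpr (fun p hpA hpT =>
        absurd (mem_Ioi.mp hpT.2) (not_lt.mpr (mem_Iic.mp hpA.2)))
    · rw [← prod_union, Iic_union_Ioi]
  have key1 : ∀ x y, ν (Ioi x ×ˢ Ioi y) = ENNReal.ofReal (1 - F x - G y + H x y) := by
    intro x y
    have := hsplit (T := Ioi x ×ˢ Ioi y) (F x - H x y) (1 - G y) (by linarith [hHleF x y]) (by linarith [hFGle x y])
      (measurableSet_Ioi.prod measurableSet_Ioi) ?_ ?_ (m1 x y) (m2 y)
    · rw [this]
      congr 1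
      ring
    · exact Set.disjoint_left.mpr (fun p hpA hpT =>
        absurd (mem_Ioi.mp hpT.1) (not_lt.mpr (mem_Iic.mp hpA.1)))
    · rw [← union_prod, Iic_union_Ioi]
  have key3 : ∀ x y, ν (Ioi x ×ˢ Iio y) = ENNReal.ofReal (G y - H x y) := by
    intro x y
    have := hsplit (T := Ioi x ×ˢ Iio y) (H x y) (G y) (hHnn x y) (hHleG x y)
      (measurableSet_Ioi.prod measurableSet_Iio) ?_ ?_ (n2 x y) (n1 y)
    · rw [this]
    · exact Set.disjoint_left.mpr (fun p hpA hpT =>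
        absurd (mem_Ioi.mp hpT.1) (not_lt.mpr (mem_Iic.mp hpA.1)))
    · rw [← union_prod, Iic_union_Ioi]
  have key4 : ∀ x y, ν (Iio x ×ˢ Ioi y) = ENNReal.ofReal (F x - H x y) := by
    intro x y
    have := hsplit (T := Iio x ×ˢ Ioi y) (H x y) (F x) (hHnn x y) (hHleF x y)
      (measurableSet_Iio.prod measurableSet_Ioi) ?_ ?_ (n3 x y) (n4 x)
    · rw [this]
    · exact Set.disjoint_left.mpr (fun p hpA hpT =>
        absurd (mem_Ioi.mp hpT.2) (not_lt.mpr (mem_Iic.mp hpA.2)))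
    · rw [← prod_union, Iic_union_Ioi]
  -- joint law of (Z 0, (X 1, Y 2))
  have hind12 : IndepFun (Z 1) (Z 2) μ := hindep.indepFun (show (1:Fin 3) ≠ 2 by decide)
  have hlaw12 : μ.map (fun ω => (Z 1 ω, Z 2 ω)) = ν.prod ν := by
    rw [(indepFun_iff_map_prod_eq_prod_map_map (hZm 1).aemeasurable (hZm 2).aemeasurable).mp hind12]
    rw [show μ.map (Z 1) = ν from hident 1, show μ.map (Z 2) = ν from hident 2]
  have hind0 : IndepFun (fun ω => (Z 1 ω, Z 2 ω)) (Z 0) μ :=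
    hindep.indepFun_prodMk hZm 1 2 0 (by decide) (by decide)
  have hlaw3 : μ.map (fun ω => (Z 0 ω, (Z 1 ω, Z 2 ω))) = ν.prod (ν.prod ν) := by
    rw [(indepFun_iff_map_prod_eq_prod_map_map (hZm 0).aemeasurable
      ((hZm 1).prodMk (hZm 2)).aemeasurable).mp hind0.symm, hlaw12, hνdef]
  set T : Ω → (ℝ×ℝ) × (ℝ×ℝ) := fun ω => (Z 0 ω, (X 1 ω, Y 2 ω)) with hTdef
  have hTm : Measurable T := (hZm 0).prodMk ((hX 1).prodMk (hY 2))
  have hφm : Measurable (fun p : (ℝ×ℝ) × ((ℝ×ℝ) × (ℝ×ℝ)) => (p.1, (p.2.1.1, p.2.2.2))) :=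
    measurable_fst.prodMk ((measurable_fst.comp (measurable_fst.comp measurable_snd)).prodMk
      (measurable_snd.comp (measurable_snd.comp measurable_snd)))
  have hTlaw : μ.map T = ν.prod (νX.prod νY) := by
    have h1 : T = (fun p : (ℝ×ℝ) × ((ℝ×ℝ) × (ℝ×ℝ)) => (p.1, (p.2.1.1, p.2.2.2))) ∘
        (fun ω => (Z 0 ω, (Z 1 ω, Z 2 ω))) := rfl
    rw [h1, ← Measure.map_map hφm ((hZm 0).prodMk ((hZm 1).prodMk (hZm 2))), hlaw3]
    have h2 : (fun p : (ℝ×ℝ) × ((ℝ×ℝ) × (ℝ×ℝ)) => (p.1, (p.2.1.1, p.2.2.2)))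
        = Prod.map id (Prod.map Prod.fst Prod.snd) := rfl
    rw [h2, ← Measure.map_prod_map _ _ measurable_id
      (measurable_fst.prodMap measurable_snd), ← Measure.map_prod_map _ _ measurable_fst
      measurable_snd, Measure.map_id, hfst, hsnd]
  -- generic slice computation
  have hslice : ∀ (S : Set ((ℝ×ℝ)×(ℝ×ℝ))) (f : ℝ×ℝ → ℝ), MeasurableSet S →
      (∀ w : ℝ×ℝ, ν ((fun z => (z, w)) ⁻¹' S) = ENNReal.ofReal (f w)) →
      Integrable f (νX.prod νY) → (∀ w, 0 ≤ f w) →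
      μ (T ⁻¹' S) = ENNReal.ofReal (∫ w, f w ∂(νX.prod νY)) := by
    intro S f hS hf hint hnn
    rw [← Measure.map_apply hTm hS, hTlaw, Measure.prod_apply_symm hS]
    simp_rw [hf]
    rw [← ofReal_integral_eq_lintegral_ofReal hint (ae_of_all _ hnn)]
  -- copula with clamped arguments
  have hHeq : ∀ x y, H x y = clampC C (F x) (G y) := by
    intro x y
    rw [hHC x y, clampC, clampI_eq (hFmem x), clampI_eq (hGmem y)]
  have hccont : Continuous (fun p : ℝ × ℝ => clampC C p.1 p.2) := clampC_cont hC
  have hcmem : ∀ u v, clampC C u v ∈ Icc (0:ℝ) 1 := fun u v =>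
    hC.1 _ (clampI_mem u) _ (clampI_mem v)
  have hφcont : Continuous (fun w : ℝ × ℝ => clampC C (F w.1) (G w.2)) :=
    hccont.comp ((hFcont.comp continuous_fst).prodMk (hGcont.comp continuous_snd))
  -- integral transfers
  have hintF : ∫ x, F x ∂νX = 1/2 := by
    have h1 : ∫ u, u ∂(νX.map F) = ∫ x, F x ∂νX :=
      integral_map hFcont.measurable.aemeasurable aestronglyMeasurable_id
    rw [← h1, hmapF, integral_Icc_eq_integral_Ioc,
      ← intervalIntegral.integral_of_le (zero_le_one)]
    simp
  have hintG : ∫ y, G y ∂νY = 1/2 := by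
    have h1 : ∫ u, u ∂(νY.map G) = ∫ y, G y ∂νY :=
      integral_map hGcont.measurable.aemeasurable aestronglyMeasurable_id
    rw [← h1, hmapG, integral_Icc_eq_integral_Ioc,
      ← intervalIntegral.integral_of_le (zero_le_one)]
    simp
  -- inner interval integral function
  set g : ℝ → ℝ := fun u => ∫ v in (0:ℝ)..1, clampC C u v with hgdef
  have hcu_cont : ∀ u, Continuous (fun v => clampC C u v) := fun u =>
    hccont.comp (continuous_const.prodMk continuous_id)
  have hgl : LipschitzWith 1 g := by
    apply LipschitzWith.of_dist_le_mul
    intro u u'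
    rw [Real.dist_eq, Real.dist_eq, hgdef]
    have hsub : (∫ v in (0:ℝ)..1, clampC C u v) - ∫ v in (0:ℝ)..1, clampC C u' v
        = ∫ v in (0:ℝ)..1, (clampC C u v - clampC C u' v) :=
      (intervalIntegral.integral_sub ((hcu_cont u).intervalIntegrable _ _)
        ((hcu_cont u').intervalIntegrable _ _)).symm
    simp only []
    rw [hsub]
    have hb := intervalIntegral.norm_integral_le_of_norm_le_const
      (C := |u - u'|) (f := fun v => clampC C u v - clampC C u' v) (a := 0) (b := 1) ?_
    · simpa using hb
    · intro v hv
      have hvm : v ∈ Icc (0:ℝ) 1 := by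
        rw [uIoc_of_le (zero_le_one)] at hv
        exact ⟨hv.1.le, hv.2⟩
      have := copula_lip hC (clampI_mem u') (clampI_mem u) (clampI_mem v) (clampI_mem v)
      simp only [clampC, Real.norm_eq_abs]
      calc |C (clampI u) (clampI v) - C (clampI u') (clampI v)|
          ≤ |clampI u - clampI u'| + |clampI v - clampI v| := this
        _ ≤ |u - u'| := by
            rw [sub_self, abs_zero, add_zero]
            exact clampI_lip u u'
  have hgcont : Continuous g := hgl.continuous
  have hgmem : ∀ u, g u ∈ Icc (0:ℝ) 1 := by
    intro u
    constructor
    · apply intervalIntegral.integral_nonneg zero_le_one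
      intro v _; exact (hcmem u v).1
    · have hmono := intervalIntegral.integral_mono_on (μ := volume) (a := 0) (b := 1)
        (f := fun v => clampC C u v) (g := fun _ => (1:ℝ)) zero_le_one
        ((hcu_cont u).intervalIntegrable _ _) intervalIntegrable_const
        (fun v _ => (hcmem u v).2)
      simpa using hmono
  set I : ℝ := ∫ u in (0:ℝ)..1, g u with hIdef
  -- the central integral
  have hintC : ∫ w, clampC C (F w.1) (G w.2) ∂(νX.prod νY) = I := by
    have hint : Integrable (fun w : ℝ × ℝ => clampC C (F w.1) (G w.2)) (νX.prod νY) := by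
      apply integrable_of_bounded' hφcont.aestronglyMeasurable
      intro w
      rw [abs_le]
      have := hcmem (F w.1) (G w.2)
      exact ⟨by linarith [this.1], this.2⟩
    rw [MeasureTheory.integral_prod _ hint]
    have hinner : ∀ x, ∫ y, clampC C (F x) (G y) ∂νY = g (F x) := by
      intro x
      have h1 : ∫ v, clampC C (F x) v ∂(νY.map G) = ∫ y, clampC C (F x) (G y) ∂νY :=
        integral_map hGcont.measurable.aemeasurable (hcu_cont (F x)).aestronglyMeasurable
      rw [← h1, hmapG, integral_Icc_eq_integral_Ioc,
        ← intervalIntegral.integral_of_le (zero_le_one), hgdef]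
    simp_rw [hinner]
    have h2 : ∫ u, g u ∂(νX.map F) = ∫ x, g (F x) ∂νX :=
      integral_map hFcont.measurable.aemeasurable hgcont.aestronglyMeasurable
    rw [← h2, hmapF, integral_Icc_eq_integral_Ioc,
      ← intervalIntegral.integral_of_le (zero_le_one), hIdef]
  -- keys with clamped copula
  have key1' : ∀ x y, ν (Ioi x ×ˢ Ioi y)
      = ENNReal.ofReal (1 - F x - G y + clampC C (F x) (G y)) := by
    intro x y; rw [key1, hHeq]
  have key2' : ∀ x y, ν (Iio x ×ˢ Iio y) = ENNReal.ofReal (clampC C (F x) (G y)) := by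
    intro x y; rw [key2, hHeq]
  have key3' : ∀ x y, ν (Ioi x ×ˢ Iio y) = ENNReal.ofReal (G y - clampC C (F x) (G y)) := by
    intro x y; rw [key3, hHeq]
  have key4' : ∀ x y, ν (Iio x ×ˢ Ioi y) = ENNReal.ofReal (F x - clampC C (F x) (G y)) := by
    intro x y; rw [key4, hHeq]
  -- integrable pieces
  have hintFw : Integrable (fun w : ℝ×ℝ => F w.1) (νX.prod νY) :=
    integrable_of_bounded' (hFcont.comp continuous_fst).aestronglyMeasurable
      (fun w => abs_le.mpr ⟨by linarith [(hFmem w.1).1], (hFmem w.1).2⟩)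
  have hintGw : Integrable (fun w : ℝ×ℝ => G w.2) (νX.prod νY) :=
    integrable_of_bounded' (hGcont.comp continuous_snd).aestronglyMeasurable
      (fun w => abs_le.mpr ⟨by linarith [(hGmem w.2).1], (hGmem w.2).2⟩)
  have hintCw : Integrable (fun w : ℝ×ℝ => clampC C (F w.1) (G w.2)) (νX.prod νY) :=
    integrable_of_bounded' hφcont.aestronglyMeasurable
      (fun w => abs_le.mpr ⟨by linarith [(hcmem (F w.1) (G w.2)).1], (hcmem (F w.1) (G w.2)).2⟩)
  have hIF2 : ∫ w : ℝ×ℝ, F w.1 ∂(νX.prod νY) = 1/2 := by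
    rw [integral_fun_fst (f := F), probReal_univ, one_smul, hintF]
  have hIG2 : ∫ w : ℝ×ℝ, G w.2 ∂(νX.prod νY) = 1/2 := by
    rw [integral_fun_snd (f := G), probReal_univ, one_smul, hintG]
  -- integrals of the four slice functions
  have hintA : Integrable (fun w : ℝ×ℝ => 1 - F w.1 - G w.2) (νX.prod νY) :=
    integrable_of_bounded' (((continuous_const.sub (hFcont.comp continuous_fst)).sub
      (hGcont.comp continuous_snd)).aestronglyMeasurable)
      (fun w => abs_le.mpr ⟨by linarith [(hFmem w.1).2, (hGmem w.2).2],
        by linarith [(hFmem w.1).1, (hGmem w.2).1]⟩)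
  have hintB : Integrable (fun w : ℝ×ℝ => 1 - F w.1) (νX.prod νY) :=
    integrable_of_bounded' ((continuous_const.sub (hFcont.comp continuous_fst)).aestronglyMeasurable)
      (fun w => abs_le.mpr ⟨by linarith [(hFmem w.1).2], by linarith [(hFmem w.1).1]⟩)
  have hJ1 : ∫ w : ℝ×ℝ, (1 - F w.1 - G w.2 + clampC C (F w.1) (G w.2)) ∂(νX.prod νY) = I := by
    rw [integral_add hintA hintCw, integral_sub hintB hintGw,
      integral_sub (integrable_const 1) hintFw, integral_const, probReal_univ,
      one_smul, hIF2, hIG2, hintC]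
    ring
  have hJ3 : ∫ w : ℝ×ℝ, (G w.2 - clampC C (F w.1) (G w.2)) ∂(νX.prod νY) = 1/2 - I := by
    rw [integral_sub hintGw hintCw, hIG2, hintC]
  have hJ4 : ∫ w : ℝ×ℝ, (F w.1 - clampC C (F w.1) (G w.2)) ∂(νX.prod νY) = 1/2 - I := by
    rw [integral_sub hintFw hintCw, hIF2, hintC]
  -- the four probabilities
  have hP1 : μ {ω | X 1 ω < X 0 ω ∧ Y 2 ω < Y 0 ω} = ENNReal.ofReal I := by
    have hS : MeasurableSet {p : (ℝ×ℝ)×(ℝ×ℝ) | p.2.1 < p.1.1 ∧ p.2.2 < p.1.2} :=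
      (measurableSet_lt (measurable_fst.comp measurable_snd)
        (measurable_fst.comp measurable_fst)).inter
      (measurableSet_lt (measurable_snd.comp measurable_snd)
        (measurable_snd.comp measurable_fst))
    have hs := hslice {p : (ℝ×ℝ)×(ℝ×ℝ) | p.2.1 < p.1.1 ∧ p.2.2 < p.1.2}
      (fun w => 1 - F w.1 - G w.2 + clampC C (F w.1) (G w.2)) hS ?_
      (((integrable_const 1).sub hintFw).sub hintGw |>.add hintCw) ?_
    · have hev : T ⁻¹' {p : (ℝ×ℝ)×(ℝ×ℝ) | p.2.1 < p.1.1 ∧ p.2.2 < p.1.2}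
          = {ω | X 1 ω < X 0 ω ∧ Y 2 ω < Y 0 ω} := rfl
      rw [← hev, hs, hJ1]
    · intro w
      have hset : (fun z : ℝ×ℝ => (z, w)) ⁻¹' {p : (ℝ×ℝ)×(ℝ×ℝ) | p.2.1 < p.1.1 ∧ p.2.2 < p.1.2}
          = Ioi w.1 ×ˢ Ioi w.2 := by
        ext z; simp [Set.mem_prod, mem_Ioi, mem_preimage]
      rw [hset, key1' w.1 w.2]
    · intro w
      have h1 := hFGle w.1 w.2
      rw [hHeq w.1 w.2] at h1
      linarith
  have hP2 : μ {ω | X 0 ω < X 1 ω ∧ Y 0 ω < Y 2 ω} = ENNReal.ofReal I := by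
    have hS : MeasurableSet {p : (ℝ×ℝ)×(ℝ×ℝ) | p.1.1 < p.2.1 ∧ p.1.2 < p.2.2} :=
      (measurableSet_lt (measurable_fst.comp measurable_fst)
        (measurable_fst.comp measurable_snd)).inter
      (measurableSet_lt (measurable_snd.comp measurable_fst)
        (measurable_snd.comp measurable_snd))
    have hs := hslice {p : (ℝ×ℝ)×(ℝ×ℝ) | p.1.1 < p.2.1 ∧ p.1.2 < p.2.2}
      (fun w => clampC C (F w.1) (G w.2)) hS ?_ hintCw ?_
    · have hev : T ⁻¹' {p : (ℝ×ℝ)×(ℝ×ℝ) | p.1.1 < p.2.1 ∧ p.1.2 < p.2.2}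
          = {ω | X 0 ω < X 1 ω ∧ Y 0 ω < Y 2 ω} := rfl
      rw [← hev, hs, hintC]
    · intro w
      have hset : (fun z : ℝ×ℝ => (z, w)) ⁻¹' {p : (ℝ×ℝ)×(ℝ×ℝ) | p.1.1 < p.2.1 ∧ p.1.2 < p.2.2}
          = Iio w.1 ×ˢ Iio w.2 := by
        ext z; simp [Set.mem_prod, mem_Iio, mem_preimage]
      rw [hset, key2' w.1 w.2]
    · exact fun w => (hcmem (F w.1) (G w.2)).1
  have hP3 : μ {ω | X 1 ω < X 0 ω ∧ Y 0 ω < Y 2 ω} = ENNReal.ofReal (1/2 - I) := by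
    have hS : MeasurableSet {p : (ℝ×ℝ)×(ℝ×ℝ) | p.2.1 < p.1.1 ∧ p.1.2 < p.2.2} :=
      (measurableSet_lt (measurable_fst.comp measurable_snd)
        (measurable_fst.comp measurable_fst)).inter
      (measurableSet_lt (measurable_snd.comp measurable_fst)
        (measurable_snd.comp measurable_snd))
    have hs := hslice {p : (ℝ×ℝ)×(ℝ×ℝ) | p.2.1 < p.1.1 ∧ p.1.2 < p.2.2}
      (fun w => G w.2 - clampC C (F w.1) (G w.2)) hS ?_ (hintGw.sub hintCw) ?_
    · have hev : T ⁻¹' {p : (ℝ×ℝ)×(ℝ×ℝ) | p.2.1 < p.1.1 ∧ p.1.2 < p.2.2}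
          = {ω | X 1 ω < X 0 ω ∧ Y 0 ω < Y 2 ω} := rfl
      rw [← hev, hs, hJ3]
    · intro w
      have hset : (fun z : ℝ×ℝ => (z, w)) ⁻¹' {p : (ℝ×ℝ)×(ℝ×ℝ) | p.2.1 < p.1.1 ∧ p.1.2 < p.2.2}
          = Ioi w.1 ×ˢ Iio w.2 := by
        ext z; simp [Set.mem_prod, mem_Ioi, mem_Iio, mem_preimage]
      rw [hset, key3' w.1 w.2]
    · intro w
      have h1 := hHleG w.1 w.2
      rw [hHeq w.1 w.2] at h1
      linarith
  have hP4 : μ {ω | X 0 ω < X 1 ω ∧ Y 2 ω < Y 0 ω} = ENNReal.ofReal (1/2 - I) := by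
    have hS : MeasurableSet {p : (ℝ×ℝ)×(ℝ×ℝ) | p.1.1 < p.2.1 ∧ p.2.2 < p.1.2} :=
      (measurableSet_lt (measurable_fst.comp measurable_fst)
        (measurable_fst.comp measurable_snd)).inter
      (measurableSet_lt (measurable_snd.comp measurable_snd)
        (measurable_snd.comp measurable_fst))
    have hs := hslice {p : (ℝ×ℝ)×(ℝ×ℝ) | p.1.1 < p.2.1 ∧ p.2.2 < p.1.2}
      (fun w => F w.1 - clampC C (F w.1) (G w.2)) hS ?_ (hintFw.sub hintCw) ?_
    · have hev : T ⁻¹' {p : (ℝ×ℝ)×(ℝ×ℝ) | p.1.1 < p.2.1 ∧ p.2.2 < p.1.2}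
          = {ω | X 0 ω < X 1 ω ∧ Y 2 ω < Y 0 ω} := rfl
      rw [← hev, hs, hJ4]
    · intro w
      have hset : (fun z : ℝ×ℝ => (z, w)) ⁻¹' {p : (ℝ×ℝ)×(ℝ×ℝ) | p.1.1 < p.2.1 ∧ p.2.2 < p.1.2}
          = Iio w.1 ×ˢ Ioi w.2 := by
        ext z; simp [Set.mem_prod, mem_Ioi, mem_Iio, mem_preimage]
      rw [hset, key4' w.1 w.2]
    · intro w
      have h1 := hHleF w.1 w.2
      rw [hHeq w.1 w.2] at h1
      linarith
  -- nonnegativity facts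
  have hInn : 0 ≤ I := by
    rw [hIdef]
    exact intervalIntegral.integral_nonneg zero_le_one (fun u _ => (hgmem u).1)
  have hIhalf : 0 ≤ 1/2 - I := by
    rw [← hJ3]
    apply integral_nonneg
    intro w
    have h1 := hHleG w.1 w.2
    rw [hHeq w.1 w.2] at h1
    simpa using h1
  -- event algebra
  have hpos : {ω | 0 < (X 0 ω - X 1 ω) * (Y 0 ω - Y 2 ω)}
      = {ω | X 1 ω < X 0 ω ∧ Y 2 ω < Y 0 ω} ∪ {ω | X 0 ω < X 1 ω ∧ Y 0 ω < Y 2 ω} := by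
    ext ω
    simp only [mem_setOf_eq, mem_union, mul_pos_iff, sub_pos, sub_neg]
  have hneg : {ω | (X 0 ω - X 1 ω) * (Y 0 ω - Y 2 ω) < 0}
      = {ω | X 1 ω < X 0 ω ∧ Y 0 ω < Y 2 ω} ∪ {ω | X 0 ω < X 1 ω ∧ Y 2 ω < Y 0 ω} := by
    ext ω
    simp only [mem_setOf_eq, mem_union, mul_neg_iff, sub_pos, sub_neg]
  have hmuPos : μ {ω | 0 < (X 0 ω - X 1 ω) * (Y 0 ω - Y 2 ω)}
      = ENNReal.ofReal I + ENNReal.ofReal I := by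
    rw [hpos]
    rw [measure_union
      (Set.disjoint_left.mpr (fun ω h1 h2 => by
        simp only [mem_setOf_eq] at h1 h2
        exact absurd h2.1 (not_lt.mpr h1.1.le)))
      (show MeasurableSet {ω | X 0 ω < X 1 ω ∧ Y 0 ω < Y 2 ω} from
        (measurableSet_lt (hX 0) (hX 1)).inter (measurableSet_lt (hY 0) (hY 2))),
      hP1, hP2]
  have hmuNeg : μ {ω | (X 0 ω - X 1 ω) * (Y 0 ω - Y 2 ω) < 0}
      = ENNReal.ofReal (1/2 - I) + ENNReal.ofReal (1/2 - I) := by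
    rw [hneg]
    rw [measure_union
      (Set.disjoint_left.mpr (fun ω h1 h2 => by
        simp only [mem_setOf_eq] at h1 h2
        exact absurd h2.1 (not_lt.mpr h1.1.le)))
      (show MeasurableSet {ω | X 0 ω < X 1 ω ∧ Y 2 ω < Y 0 ω} from
        (measurableSet_lt (hX 0) (hX 1)).inter (measurableSet_lt (hY 2) (hY 0))),
      hP3, hP4]
  -- identify the copula integral
  have hCCI : (∫ u in (0:ℝ)..1, ∫ v in (0:ℝ)..1, C u v) = I := by
    rw [hIdef]
    apply intervalIntegral.integral_congr
    intro u hu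
    rw [uIcc_of_le zero_le_one] at hu
    apply intervalIntegral.integral_congr
    intro v hv
    rw [uIcc_of_le zero_le_one] at hv
    show C u v = clampC C u v
    rw [clampC, clampI_eq hu, clampI_eq hv]
  rw [hmuPos, hmuNeg, hCCI]
  rw [← ENNReal.ofReal_add hInn hInn, ← ENNReal.ofReal_add hIhalf hIhalf,
    ENNReal.toReal_ofReal (by linarith), ENNReal.toReal_ofReal (by linarith)]
  ring
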